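/- Fix k ≥ 0. The number of equivalence classes of binary bracketings with n > k operation occurrences under the relation 's ~ t iff |left^i(s)| = |left^i(t)| for i = 1,…,k' equals Σ_{i=0}^{k} binom(n-1, i), a polynomial in n of degree k. -/

import Mathlib

/-- p-ary bracketings: terms over one variable `x` with one p-ary operation symbol `ω`. -/
inductive Brack (p : ℕ) : Type
  | x : Brack p
  | node : (Fin p → Brack p) → Brack p

namespace Brack

/-- occurrence number: number of occurrences of ω -/
def occ {p : ℕ} : Brack p → ℕ
  | .x => 0
  | .node f => 1 + ∑ i, occ (f i)

/-- length: number of occurrences of x -/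
def len {p : ℕ} : Brack p → ℕ
  | .x => 1
  | .node f => ∑ i, len (f i)

/-- evaluation of a bracketing in a groupoid, variables enumerated left-to-right
starting at position `j`. -/
def evalFrom {p : ℕ} {A : Type*} (op : (Fin p → A) → A) (v : ℕ → A) :
    Brack p → ℕ → A
  | .x, j => v j
  | .node f, j =>
      op (fun i => evalFrom op v (f i)
        (j + ∑ k ∈ Finset.univ.filter (· < i), len (f k)))

/-- the term function induced by a bracketing -/
def eval {p : ℕ} {A : Type*} (op : (Fin p → A) → A) (t : Brack p) (v : ℕ → A) : A :=
  evalFrom op v t 0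

/-- prefix word of a bracketing: `true` codes ω, `false` codes x -/
def word {p : ℕ} : Brack p → List Bool
  | .x => [false]
  | .node f => true :: (List.ofFn (fun i => word (f i))).flatten

/-- auxiliary: scan a word, recording 1 + number of x's before each ω -/
def STaux : List Bool → ℕ → List ℕ
  | [], _ => []
  | true :: w, c => (c + 1) :: STaux w c
  | false :: w, c => STaux w (c + 1)

/-- insertion tuple of a bracketing: the i-th entry is one plus the number
of x's preceding the i-th occurrence of ω in the prefix notation -/
def ST {p : ℕ} (t : Brack p) : List ℕ := STaux (word t) 0

/-- replace the i-th (0-based) occurrence of x in `t` by `s` -/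
def replaceLeaf {p : ℕ} : Brack p → ℕ → Brack p → Brack p
  | .x, i, s => if i = 0 then s else .x
  | .node f, i, s => .node (fun j =>
      let off := ∑ k ∈ Finset.univ.filter (· < j), len (f k)
      if off ≤ i ∧ i < off + len (f j) then replaceLeaf (f j) (i - off) s else f j)

/-- β_i : insertion of ω x … x at the i-th (1-based) occurrence of x -/
def beta {p : ℕ} (i : ℕ) (t : Brack p) : Brack p :=
  replaceLeaf t (i - 1) (.node (fun _ => .x))

/-- left depth: depth of leftmost leaf (binary case) -/
def dl : Brack 2 → ℕ
  | .x => 0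
  | .node f => dl (f 0) + 1

/-- right depth: depth of rightmost leaf (binary case) -/
def dr : Brack 2 → ℕ
  | .x => 0
  | .node f => dr (f 1) + 1

/-- left factor of a binary bracketing -/
def leftF : Brack 2 → Brack 2
  | .x => .x
  | .node f => f 0

/-- whether a bracketing is the single variable x -/
def isX {p : ℕ} : Brack p → Bool
  | .x => true
  | .node _ => false

/-- number of pairs of eggs, i.e. subterm occurrences of ω x x (binary case) -/
def eggs : Brack 2 → ℕ
  | .x => 0
  | .node f => (if isX (f 0) && isX (f 1) then 1 else 0) + eggs (f 0) + eggs (f 1)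

end Brack

/-- generalized Catalan numbers -/
def genCat (p : ℕ) : ℕ → ℕ
  | 0 => 1
  | n + 1 =>
      ∑ v ∈ (Finset.Nat.antidiagonalTuple p n).attach, ∏ k : Fin p, genCat p (v.1 k)
  decreasing_by
    have hv := Finset.Nat.mem_antidiagonalTuple.mp v.2
    have hle : v.1 k ≤ n := by
      calc v.1 k ≤ ∑ i, v.1 i :=
            Finset.single_le_sum (fun i _ => Nat.zero_le _) (Finset.mem_univ k)
        _ = n := hv
    omega

/-- the set M(n,k,p) of weakly increasing n-tuples of positive integers
with u_i ≤ (p-1)(i-1)+k (here indices are 0-based) -/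
def Mset (n k p : ℕ) : Set (Fin n → ℕ) :=
  {u | (∀ i : Fin n, 1 ≤ u i ∧ u i ≤ (p - 1) * (i : ℕ) + k) ∧
    ∀ i j : Fin n, i ≤ j → u i ≤ u j}

/-- the setoid identifying binary bracketings with the same lengths of the
first k iterated left factors -/
def leftSetoid (k n : ℕ) : Setoid {t : Brack 2 // Brack.occ t = n} :=
  ⟨fun s t => ∀ i ∈ Finset.Icc 1 k,
      Brack.len (Brack.leftF^[i] s.1) = Brack.len (Brack.leftF^[i] t.1),
    ⟨fun _ _ _ => rfl, fun h i hi => (h i hi).symm,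
      fun h1 h2 i hi => (h1 i hi).trans (h2 i hi)⟩⟩

namespace Stmt16

open Brack

lemma len_pos (t : Brack 2) : 1 ≤ t.len := by
  induction t with
  | x => simp [Brack.len]
  | node f ih => simp only [Brack.len, Fin.sum_univ_two]; have := ih 0; omega

lemma occ_add_one (t : Brack 2) : t.occ + 1 = t.len := by
  induction t with
  | x => rfl
  | node f ih =>
    simp only [Brack.occ, Brack.len, Fin.sum_univ_two]
    have := ih 0; have := ih 1; omega

lemma len_node (f : Fin 2 → Brack 2) : (Brack.node f).len = (f 0).len + (f 1).len := by
  simp [Brack.len, Fin.sum_univ_two]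

lemma leftF_spec (t : Brack 2) (h : 2 ≤ t.len) :
    1 ≤ t.leftF.len ∧ t.leftF.len < t.len := by
  cases t with
  | x => simp [Brack.len] at h
  | node f =>
    have h0 := len_pos (f 0); have h1 := len_pos (f 1)
    rw [len_node]
    exact ⟨h0, by simpa [Brack.leftF] using by omega⟩

lemma len_eq_one (t : Brack 2) (h : t.len = 1) : t = .x := by
  cases t with
  | x => rfl
  | node f => have h0 := len_pos (f 0); have h1 := len_pos (f 1); rw [len_node] at h; omega

/-- iterated left-factor lengths -/
def M (t : Brack 2) (i : ℕ) : ℕ := (Brack.leftF^[i] t).len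

lemma M_zero (t : Brack 2) : M t 0 = t.len := rfl

lemma M_succ (t : Brack 2) (i : ℕ) : M t (i + 1) = ((Brack.leftF^[i] t).leftF).len := by
  simp [M, Function.iterate_succ_apply']

lemma M_pos (t : Brack 2) (i : ℕ) : 1 ≤ M t i := len_pos _

lemma M_step (t : Brack 2) (i : ℕ) (h : 2 ≤ M t i) : M t (i + 1) < M t i := by
  rw [M_succ]
  exact (leftF_spec _ h).2

lemma M_one (t : Brack 2) (i : ℕ) (h : M t i = 1) : M t (i + 1) = 1 := by
  rw [M_succ]
  rw [M] at h
  rw [len_eq_one _ h]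
  rfl

lemma M_one_le (t : Brack 2) {i j : ℕ} (hij : i ≤ j) (h : M t i = 1) : M t j = 1 := by
  induction j with
  | zero =>
    have hi0 : i = 0 := by omega
    exact hi0 ▸ h
  | succ j ih =>
    rcases Nat.lt_or_ge i (j + 1) with hl | hg
    · exact M_one t j (ih (by omega))
    · have hij' : i = j + 1 := by omega
      exact hij' ▸ h

lemma M_strict (t : Brack 2) {i j : ℕ} (hij : i < j) (h : 2 ≤ M t j) : M t j < M t i := by
  induction j with
  | zero => omega
  | succ j ih =>
    have h2 : 2 ≤ M t j := by
      by_contra hc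
      have := M_pos t j
      have : M t j = 1 := by omega
      have := M_one t j this
      omega
    have hstep := M_step t j h2
    rcases Nat.lt_or_ge i j with hl | hg
    · exact lt_trans hstep (ih hl h2)
    · have hij' : i = j := by omega
      subst hij'
      exact hstep

/-- right comb with given occurrence number -/
def comb : ℕ → Brack 2
  | 0 => .x
  | n + 1 => .node ![.x, comb n]

lemma len_comb (n : ℕ) : (comb n).len = n + 1 := by
  induction n with
  | zero => rfl
  | succ n ih => simp [comb, len_node, ih, Brack.len]; omega

/-- build a tree with prescribed left-factor lengths m 1, ..., m j and total len m 0 -/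
def build : ℕ → (ℕ → ℕ) → Brack 2
  | 0, m => comb (m 0 - 1)
  | j + 1, m =>
      if m 0 ≤ 1 then .x
      else .node ![build j (fun i => m (i + 1)), comb (m 0 - m 1 - 1)]

def Good (j : ℕ) (m : ℕ → ℕ) : Prop :=
  1 ≤ m 0 ∧ ∀ i < j, 1 ≤ m (i + 1) ∧ (2 ≤ m i → m (i + 1) < m i) ∧ (m i = 1 → m (i + 1) = 1)

lemma M_x (i : ℕ) : M Brack.x i = 1 := by
  induction i with
  | zero => rfl
  | succ i ih => exact M_one _ i ih

lemma build_spec (j : ℕ) : ∀ m : ℕ → ℕ, Good j m →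
    (build j m).len = m 0 ∧ ∀ i ≤ j, M (build j m) i = m i := by
  induction j with
  | zero =>
    intro m hm
    obtain ⟨hm0, -⟩ := hm
    have h1 : (build 0 m).len = m 0 := by
      simp [build, len_comb]; omega
    exact ⟨h1, by intro i hi; simp [Nat.le_zero.mp hi, M_zero, h1]⟩
  | succ j ih =>
    intro m hm
    obtain ⟨hm0, hm1⟩ := hm
    by_cases hc : m 0 ≤ 1
    · have hm01 : m 0 = 1 := by omega
      have hall : ∀ i ≤ j + 1, m i = 1 := by
        intro i hi
        induction i with
        | zero => exact hm01
        | succ i ih2 => exact (hm1 i (by omega)).2.2 (ih2 (by omega))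
      constructor
      · simp [build, hc]; exact hm01.symm ▸ rfl
      · intro i hi
        simp only [build, hc, if_true]
        rw [M_x, hall i hi]
    · push_neg at hc
      have h01 := hm1 0 (by omega)
      have hlt : m 1 < m 0 := h01.2.1 hc
      have hp1 : 1 ≤ m 1 := h01.1
      have hgood : Good j (fun i => m (i + 1)) := by
        refine ⟨hp1, fun i hi => hm1 (i + 1) (by omega)⟩
      obtain ⟨hlen, hM⟩ := ih _ hgood
      have hb : build (j + 1) m =
          .node ![build j (fun i => m (i + 1)), comb (m 0 - m 1 - 1)] := by
        simp [build, Nat.not_le.mpr hc]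
      have hlen2 : (build j fun i => m (i + 1)).len = m 1 := by simpa using hlen
      have hlen' : (build (j + 1) m).len = m 0 := by
        rw [hb, len_node]
        simp only [Matrix.cons_val_zero, Matrix.cons_val_one, Matrix.head_cons]
        rw [hlen2, len_comb]
        omega
      refine ⟨hlen', fun i hi => ?_⟩
      cases i with
      | zero => simpa [M_zero] using hlen'
      | succ i =>
        have hleft : (build (j + 1) m).leftF = build j (fun i => m (i + 1)) := by
          rw [hb]; rfl
        have : M (build (j + 1) m) (i + 1) = M (build j (fun i => m (i + 1))) i := by
          simp [M, Function.iterate_succ_apply, hleft]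
        rw [this, hM i (by omega)]

/-- descending sort of a finset -/
def sortD (S : Finset ℕ) : List ℕ := S.sort (· ≥ ·)

/-- the i-th largest element of S, or 1 if i ≥ |S| (0-based) -/
def toSeqN (S : Finset ℕ) (i : ℕ) : ℕ := (sortD S).getD i 1

lemma length_sortD (S : Finset ℕ) : (sortD S).length = S.card := Finset.length_sort _

lemma toFinset_sortD (S : Finset ℕ) : (sortD S).toFinset = S := by
  ext a; simp [sortD, List.mem_toFinset, Finset.mem_sort]

lemma pairwise_gt_sortD (S : Finset ℕ) : (sortD S).Pairwise (· > ·) := by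
  have h1 : (sortD S).Pairwise (· ≥ ·) := Finset.pairwise_sort _ _
  have h2 : (sortD S).Pairwise (· ≠ ·) := Finset.sort_nodup _ _
  exact (h1.and h2).imp (fun ⟨hge, hne⟩ => lt_of_le_of_ne hge (Ne.symm hne))

lemma toSeqN_mem (S : Finset ℕ) (i : ℕ) (hi : i < S.card) : toSeqN S i ∈ S := by
  have hlen : i < (sortD S).length := by rw [length_sortD]; exact hi
  rw [toSeqN, List.getD_eq_getElem _ _ hlen]
  have : (sortD S)[i] ∈ (sortD S).toFinset := List.mem_toFinset.mpr (List.getElem_mem hlen)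
  rwa [toFinset_sortD] at this

lemma toSeqN_default (S : Finset ℕ) (i : ℕ) (hi : S.card ≤ i) : toSeqN S i = 1 := by
  rw [toSeqN, List.getD_eq_default]
  rw [length_sortD]; exact hi

lemma toSeqN_strict (S : Finset ℕ) (i j : ℕ) (hij : i < j) (hj : j < S.card) :
    toSeqN S j < toSeqN S i := by
  have hlj : j < (sortD S).length := by rw [length_sortD]; exact hj
  have hli : i < (sortD S).length := by omega
  rw [toSeqN, toSeqN, List.getD_eq_getElem _ _ hlj, List.getD_eq_getElem _ _ hli]
  exact List.pairwise_iff_getElem.mp (pairwise_gt_sortD S) i j hli hlj hij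

/-- the family of subsets of [2, n] of size at most k -/
def Sfam (n k : ℕ) : Finset (Finset ℕ) :=
  (Finset.Icc 2 n).powerset.filter (fun S => S.card ≤ k)

lemma card_Sfam (n k : ℕ) :
    (Sfam n k).card = ∑ i ∈ Finset.range (k + 1), Nat.choose (n - 1) i := by
  have hI : (Finset.Icc 2 n).card = n - 1 := by rw [Nat.card_Icc]; omega
  have heq : Sfam n k =
      (Finset.range (k + 1)).biUnion (fun i => Finset.powersetCard i (Finset.Icc 2 n)) := by
    ext S
    simp only [Sfam, Finset.mem_filter, Finset.mem_powerset, Finset.mem_biUnion,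
      Finset.mem_range, Finset.mem_powersetCard]
    constructor
    · rintro ⟨hsub, hcard⟩; exact ⟨S.card, by omega, hsub, rfl⟩
    · rintro ⟨i, hi, hsub, hcard⟩; exact ⟨hsub, by omega⟩
  rw [heq, Finset.card_biUnion]
  · exact Finset.sum_congr rfl (fun i _ => by rw [Finset.card_powersetCard, hI])
  · intro i _ j _ hij
    simp only [Finset.disjoint_left, Finset.mem_powersetCard]
    rintro S ⟨-, h1⟩ ⟨-, h2⟩
    exact hij (h1 ▸ h2)

lemma toSeqN_injOn (n k : ℕ) :
    ∀ S ∈ Sfam n k, ∀ S' ∈ Sfam n k,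
      (∀ i < k, toSeqN S i = toSeqN S' i) → S = S' := by
  have key : ∀ S ∈ Sfam n k, ∀ i < S.card, 2 ≤ toSeqN S i := by
    intro S hS i hi
    simp only [Sfam, Finset.mem_filter, Finset.mem_powerset] at hS
    exact (Finset.mem_Icc.mp (hS.1 (toSeqN_mem S i hi))).1
  have cardle : ∀ S ∈ Sfam n k, S.card ≤ k := by
    intro S hS
    simp only [Sfam, Finset.mem_filter] at hS
    exact hS.2
  have lenle : ∀ S ∈ Sfam n k, ∀ S' ∈ Sfam n k,
      (∀ i < k, toSeqN S i = toSeqN S' i) → S.card ≤ S'.card := by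
    intro S hS S' hS' h
    by_contra hc
    push_neg at hc
    have h1 : 2 ≤ toSeqN S S'.card := key S hS _ (by omega)
    have h2 : toSeqN S' S'.card = 1 := toSeqN_default _ _ le_rfl
    have := h S'.card (by have := cardle S hS; omega)
    omega
  intro S hS S' hS' h
  have hcard : S.card = S'.card :=
    le_antisymm (lenle S hS S' hS' h) (lenle S' hS' S hS (fun i hi => (h i hi).symm))
  have hlists : sortD S = sortD S' := by
    apply List.ext_getElem
    · rw [length_sortD, length_sortD, hcard]
    · intro i h1 h2
      have hik : i < k := by
        have := cardle S hS; rw [length_sortD] at h1; omega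
      have := h i hik
      rw [toSeqN, toSeqN, List.getD_eq_getElem _ _ h1, List.getD_eq_getElem _ _ h2] at this
      exact this
  rw [← toFinset_sortD S, ← toFinset_sortD S', hlists]

lemma filter_eq_range (k : ℕ) (P : ℕ → Prop) [DecidablePred P]
    (hdc : ∀ i j, i ≤ j → P j → P i) :
    (Finset.range k).filter P = Finset.range ((Finset.range k).filter P).card := by
  set s := (Finset.range k).filter P with hs
  ext i
  simp only [Finset.mem_range]
  constructor
  · intro hi
    have hik : i < k := Finset.mem_range.mp (Finset.mem_filter.mp hi).1
    have hPi : P i := (Finset.mem_filter.mp hi).2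
    have hsub : Finset.range (i + 1) ⊆ s := by
      intro j hj
      have hj' : j < i + 1 := Finset.mem_range.mp hj
      exact Finset.mem_filter.mpr ⟨Finset.mem_range.mpr (by omega),
        hdc j i (by omega) hPi⟩
    have := Finset.card_le_card hsub
    rw [Finset.card_range] at this
    omega
  · intro hi
    by_contra hc
    have hsub : s ⊆ Finset.range i := by
      intro j hj
      rw [Finset.mem_range]
      by_contra hc2
      have hj' := Finset.mem_filter.mp hj
      have hik : i < k := by
        have := Finset.mem_range.mp hj'.1; omega
      exact hc (Finset.mem_filter.mpr ⟨Finset.mem_range.mpr hik,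
        hdc i j (by omega) hj'.2⟩)
    have := Finset.card_le_card hsub
    rw [Finset.card_range] at this
    omega

end Stmt16

theorem stmt_16 (k n : ℕ) (hn : k < n) :
    Nat.card (Quotient (leftSetoid k n)) =
      ∑ i ∈ Finset.range (k + 1), Nat.choose (n - 1) i := by
  classical
  set f : {t : Brack 2 // Brack.occ t = n} → (Fin k → ℕ) :=
    fun t i => Stmt16.M t.1 ((i : ℕ) + 1) with hf
  have hker : leftSetoid k n = Setoid.ker f := by
    apply Setoid.ext
    intro s t
    constructor
    · intro h
      show f s = f t
      funext i
      exact h ((i : ℕ) + 1) (Finset.mem_Icc.mpr ⟨by omega, by have := i.isLt; omega⟩)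
    · intro h i hi
      rw [Finset.mem_Icc] at hi
      have h2 : f s = f t := h
      have := congrFun h2 ⟨i - 1, by omega⟩
      simp only [hf] at this
      show Stmt16.M s.1 i = Stmt16.M t.1 i
      have hii : i - 1 + 1 = i := by omega
      rwa [hii] at this
  rw [hker, Nat.card_congr (Setoid.quotientKerEquivRange f)]
  have hrange : Set.range f =
      ↑((Stmt16.Sfam n k).image (fun S => fun i : Fin k => Stmt16.toSeqN S (i : ℕ))) := by
    ext m
    simp only [Set.mem_range, Finset.coe_image, Set.mem_image, Finset.mem_coe]
    constructor
    · rintro ⟨⟨t, ht⟩, rfl⟩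
      set P : ℕ → Prop := fun i => 2 ≤ Stmt16.M t (i + 1) with hP
      have hdc : ∀ i j, i ≤ j → P j → P i := by
        intro i j hij hPj
        by_contra hc
        have h1 : Stmt16.M t (i + 1) = 1 := by
          have := Stmt16.M_pos t (i + 1)
          simp only [hP] at hc
          omega
        have := Stmt16.M_one_le t (show i + 1 ≤ j + 1 by omega) h1
        simp only [hP] at hPj
        omega
      set s0 := (Finset.range k).filter P with hs0
      set r := s0.card with hr
      have hrange0 : s0 = Finset.range r := Stmt16.filter_eq_range k P hdc
      have hrk : r ≤ k := by
        have := Finset.card_filter_le (Finset.range k) P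
        rw [Finset.card_range] at this
        exact this
      have hM0 : Stmt16.M t 0 = n + 1 := by
        rw [Stmt16.M_zero, ← Stmt16.occ_add_one, ht]
      have hbig : ∀ i, i < r → 2 ≤ Stmt16.M t (i + 1) := by
        intro i hi
        have : i ∈ s0 := by rw [hrange0]; exact Finset.mem_range.mpr hi
        exact (Finset.mem_filter.mp this).2
      have hsmall : ∀ i, r ≤ i → i < k → Stmt16.M t (i + 1) = 1 := by
        intro i h1 h2
        by_contra hc
        have hPi : P i := by
          have := Stmt16.M_pos t (i + 1)
          simp only [hP]
          omega
        have : i ∈ s0 := Finset.mem_filter.mpr ⟨Finset.mem_range.mpr h2, hPi⟩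
        rw [hrange0, Finset.mem_range] at this
        omega
      set l : List ℕ := (List.range r).map (fun i => Stmt16.M t (i + 1)) with hl
      have hlen_l : l.length = r := by simp [hl]
      have hgetl : ∀ i (h : i < l.length), l[i] = Stmt16.M t (i + 1) := by
        intro i h
        simp [hl]
      have hpl : l.Pairwise (· > ·) := by
        rw [List.pairwise_iff_getElem]
        intro a b ha hb hab
        rw [hgetl a ha, hgetl b hb]
        rw [hlen_l] at hb
        exact Stmt16.M_strict t (by omega) (hbig b hb)
      have hnd : l.Nodup := hpl.imp (fun h => ne_of_gt h)
      set S := l.toFinset with hS'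
      have hSsub : S ⊆ Finset.Icc 2 n := by
        intro a ha
        rw [hS', List.mem_toFinset] at ha
        obtain ⟨i, hi, rfl⟩ := List.mem_map.mp ha
        rw [List.mem_range] at hi
        refine Finset.mem_Icc.mpr ⟨hbig i hi, ?_⟩
        have := Stmt16.M_strict t (show 0 < i + 1 by omega) (hbig i hi)
        omega
      have hScard : S.card = r := by
        rw [hS', List.toFinset_card_of_nodup hnd, hlen_l]
      have hSmem : S ∈ Stmt16.Sfam n k :=
        Finset.mem_filter.mpr ⟨Finset.mem_powerset.mpr hSsub, by omega⟩
      have hsort : Stmt16.sortD S = l := by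
        refine List.Perm.eq_of_pairwise' (r := (· ≥ ·)) ?_ ?_ ?_
        rotate_right
        · exact List.perm_of_nodup_nodup_toFinset_eq
            (Finset.sort_nodup _ _) hnd (by rw [Stmt16.toFinset_sortD])
        · exact Finset.pairwise_sort _ _
        · exact hpl.imp (fun h => le_of_lt h)
      refine ⟨S, hSmem, ?_⟩
      funext i
      show Stmt16.toSeqN S (i : ℕ) = Stmt16.M t ((i : ℕ) + 1)
      rcases Nat.lt_or_ge (i : ℕ) r with hir | hir
      · have hil : (i : ℕ) < l.length := by omega
        rw [Stmt16.toSeqN, hsort, List.getD_eq_getElem _ _ hil]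
        exact hgetl _ hil
      · rw [Stmt16.toSeqN_default S _ (by omega)]
        exact (hsmall _ hir i.isLt).symm
    · rintro ⟨S, hS, rfl⟩
      have hSsub : S ⊆ Finset.Icc 2 n := Finset.mem_powerset.mp (Finset.mem_filter.mp hS).1
      have hScard : S.card ≤ k := (Finset.mem_filter.mp hS).2
      have hmem2 : ∀ i < S.card, 2 ≤ Stmt16.toSeqN S i ∧ Stmt16.toSeqN S i ≤ n :=
        fun i hi => Finset.mem_Icc.mp (hSsub (Stmt16.toSeqN_mem S i hi))
      set mh : ℕ → ℕ := fun i => match i with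
        | 0 => n + 1
        | j + 1 => Stmt16.toSeqN S j with hmh
      have hmh0 : mh 0 = n + 1 := rfl
      have hmhs : ∀ j, mh (j + 1) = Stmt16.toSeqN S j := fun j => rfl
      have hpos : ∀ i, 1 ≤ Stmt16.toSeqN S i := by
        intro i
        rcases Nat.lt_or_ge i S.card with h | h
        · have := (hmem2 i h).1; omega
        · rw [Stmt16.toSeqN_default S i h]
      have hgood : Stmt16.Good k mh := by
        refine ⟨by rw [hmh0]; omega, ?_⟩
        intro i hi
        refine ⟨by rw [hmhs]; exact hpos i, ?_, ?_⟩
        · intro h2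
          cases i with
          | zero =>
            show Stmt16.toSeqN S 0 < n + 1
            rcases Nat.lt_or_ge 0 S.card with h | h
            · have := (hmem2 0 h).2; omega
            · rw [Stmt16.toSeqN_default S 0 h]; omega
          | succ j =>
            rw [hmhs] at h2 ⊢
            rw [hmhs]
            have hj : j < S.card := by
              by_contra hc
              rw [Stmt16.toSeqN_default S j (by omega)] at h2
              omega
            rcases Nat.lt_or_ge (j + 1) S.card with h | h
            · exact Stmt16.toSeqN_strict S j (j + 1) (by omega) h
            · rw [Stmt16.toSeqN_default S (j + 1) h]
              omega
        · intro h1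
          cases i with
          | zero => rw [hmh0] at h1; omega
          | succ j =>
            rw [hmhs] at h1 ⊢
            have hj : S.card ≤ j := by
              by_contra hc
              have := (hmem2 j (by omega)).1
              omega
            exact Stmt16.toSeqN_default S (j + 1) (by omega)
      obtain ⟨hlen, hM⟩ := Stmt16.build_spec k mh hgood
      have hocc : (Stmt16.build k mh).occ = n := by
        have h3 := Stmt16.occ_add_one (Stmt16.build k mh)
        rw [hlen, hmh0] at h3
        omega
      refine ⟨⟨Stmt16.build k mh, hocc⟩, ?_⟩
      funext i
      show Stmt16.M (Stmt16.build k mh) ((i : ℕ) + 1) = Stmt16.toSeqN S (i : ℕ)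
      rw [hM ((i : ℕ) + 1) (by have := i.isLt; omega), hmhs]
  rw [hrange, Nat.card_coe_set_eq, Set.ncard_coe_finset,
    Finset.card_image_of_injOn, Stmt16.card_Sfam]
  intro S hS S' hS' h
  exact Stmt16.toSeqN_injOn n k S (Finset.mem_coe.mp hS) S' (Finset.mem_coe.mp hS')
    (fun i hi => congrFun h ⟨i, hi⟩)
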